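/- arXiv:2407.15585 — 6 statements merged into one kernel-verified Lean document; each statement's English description precedes it below -/
import Mathlib

section
/- Let A ⊆ ℝ^m be finite and let F be its frame (the set of extreme points of vrs(A) that lie in A). Then vrs(F) = vrs(A). -/
open scoped Classical
open Finset

noncomputable section

/-- The VRS (free-disposal convex) hull of a finite set of points in ℝ^m. -/
def vrs {m : ℕ} (S : Finset (Fin m → ℝ)) : Set (Fin m → ℝ) :=
  {z | ∃ l : (Fin m → ℝ) → ℝ, (∀ a, 0 ≤ l a) ∧ (∑ a ∈ S, l a) = 1 ∧
    ∀ k, z k ≤ ∑ a ∈ S, l a * a k}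

/-- The frame of `A`: the points of `A` that are extreme points of `vrs A`. -/
def frame {m : ℕ} (A : Finset (Fin m → ℝ)) : Finset (Fin m → ℝ) :=
  A.filter fun a => a ∈ Set.extremePoints ℝ (vrs A)

lemma self_mem_vrs {m : ℕ} {S : Finset (Fin m → ℝ)} {a : Fin m → ℝ} (ha : a ∈ S) :
    a ∈ vrs S := by
  refine ⟨fun b => if b = a then 1 else 0, ?_, ?_, ?_⟩
  · intro b; dsimp only; split <;> norm_num
  · simp [Finset.sum_ite_eq', ha]
  · intro k; simp [ite_mul, Finset.sum_ite_eq', ha]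

lemma vrs_mono {m : ℕ} {S T : Finset (Fin m → ℝ)} (h : S ⊆ T) : vrs S ⊆ vrs T := by
  rintro z ⟨l, hl0, hl1, hle⟩
  refine ⟨fun a => if a ∈ S then l a else 0, ?_, ?_, ?_⟩
  · intro b; dsimp only; split
    · exact hl0 b
    · exact le_refl 0
  · rw [← Finset.sum_subset h (fun x _ hx => by simp [hx])]
    simpa using hl1
  · intro k
    rw [← Finset.sum_subset h (fun x _ hx => by simp [hx])]
    simpa using hle k

lemma vrs_trans {m : ℕ} {S T : Finset (Fin m → ℝ)}
    (h : ∀ a ∈ S, (a : Fin m → ℝ) ∈ vrs T) : vrs S ⊆ vrs T := by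
  rintro z ⟨l, hl0, hl1, hle⟩
  have h' : ∀ a : Fin m → ℝ, ∃ μ : (Fin m → ℝ) → ℝ, a ∈ S →
      ((∀ f, 0 ≤ μ f) ∧ (∑ f ∈ T, μ f) = 1 ∧ ∀ k, a k ≤ ∑ f ∈ T, μ f * f k) := by
    intro a
    by_cases haS : a ∈ S
    · obtain ⟨μ, h1, h2, h3⟩ := h a haS
      exact ⟨μ, fun _ => ⟨h1, h2, h3⟩⟩
    · exact ⟨fun _ => 0, fun ha' => absurd ha' haS⟩
  choose μ hμ using h'
  refine ⟨fun f => ∑ a ∈ S, l a * μ a f, ?_, ?_, ?_⟩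
  · intro f
    apply Finset.sum_nonneg
    intro a haS
    exact mul_nonneg (hl0 a) ((hμ a haS).1 f)
  · rw [Finset.sum_comm]
    rw [← hl1]
    apply Finset.sum_congr rfl
    intro a haS
    rw [← Finset.mul_sum, (hμ a haS).2.1, mul_one]
  · intro k
    calc z k ≤ ∑ a ∈ S, l a * a k := hle k
      _ ≤ ∑ a ∈ S, l a * (∑ f ∈ T, μ a f * f k) := by
          apply Finset.sum_le_sum
          intro a haS
          exact mul_le_mul_of_nonneg_left ((hμ a haS).2.2 k) (hl0 a)
      _ = ∑ f ∈ T, (∑ a ∈ S, l a * μ a f) * f k := by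
          simp_rw [Finset.mul_sum, Finset.sum_mul, mul_assoc]
          rw [Finset.sum_comm]

lemma mem_vrs_erase {m : ℕ} {A : Finset (Fin m → ℝ)} {a : Fin m → ℝ} (ha : a ∈ A)
    (hne : a ∉ Set.extremePoints ℝ (vrs A)) : a ∈ vrs (A.erase a) := by
  have haV : a ∈ vrs A := self_mem_vrs ha
  rw [mem_extremePoints] at hne
  push_neg at hne
  obtain ⟨x₁, hx₁, x₂, hx₂, hseg, hne2⟩ := hne haV
  obtain ⟨t₁, t₂, ht₁, ht₂, hts, heq⟩ := hseg
  obtain ⟨lam, hlam0, hlam1, hlam⟩ := hx₁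
  obtain ⟨mu, hmu0, hmu1, hmu⟩ := hx₂
  set ν : (Fin m → ℝ) → ℝ := fun b => t₁ * lam b + t₂ * mu b with hνdef
  have hν0 : ∀ b, 0 ≤ ν b := fun b =>
    add_nonneg (mul_nonneg ht₁.le (hlam0 b)) (mul_nonneg ht₂.le (hmu0 b))
  have hν1 : ∑ b ∈ A, ν b = 1 := by
    simp only [hνdef, Finset.sum_add_distrib, ← Finset.mul_sum, hlam1, hmu1, mul_one]
    exact hts
  have hak : ∀ k, a k = t₁ * x₁ k + t₂ * x₂ k := by
    intro k
    have := congrFun heq k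
    simpa using this.symm
  have hale : ∀ k, a k ≤ ∑ b ∈ A, ν b * b k := by
    intro k
    rw [hak k]
    calc t₁ * x₁ k + t₂ * x₂ k
        ≤ t₁ * (∑ b ∈ A, lam b * b k) + t₂ * (∑ b ∈ A, mu b * b k) :=
          add_le_add (mul_le_mul_of_nonneg_left (hlam k) ht₁.le)
            (mul_le_mul_of_nonneg_left (hmu k) ht₂.le)
      _ = ∑ b ∈ A, ν b * b k := by
          simp only [hνdef, Finset.mul_sum, ← Finset.sum_add_distrib]
          exact Finset.sum_congr rfl fun b _ => by ring
  have hνa_le : ν a ≤ 1 := hν1 ▸ Finset.single_le_sum (fun b _ => hν0 b) ha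
  by_cases hlt : ν a < 1
  · set c := 1 - ν a with hc
    have hc0 : 0 < c := by simp only [hc]; linarith
    have hsum_er : ∑ b ∈ A.erase a, ν b = c := by
      have h' := Finset.add_sum_erase A ν ha
      simp only [hc]; linarith [hν1]
    refine ⟨fun b => ν b / c, fun b => div_nonneg (hν0 b) hc0.le, ?_, ?_⟩
    · rw [← Finset.sum_div, hsum_er, div_self hc0.ne']
    · intro k
      have h1 : a k ≤ ν a * a k + ∑ b ∈ A.erase a, ν b * b k := by
        have h' := hale k
        rwa [← Finset.add_sum_erase A (fun b => ν b * b k) ha] at h'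
      have h2 : c * a k ≤ ∑ b ∈ A.erase a, ν b * b k := by
        have : c * a k = a k - ν a * a k := by ring
        linarith
      have h3 : a k ≤ (∑ b ∈ A.erase a, ν b * b k) / c := by
        rw [le_div_iff₀ hc0]; linarith [h2]
      calc a k ≤ (∑ b ∈ A.erase a, ν b * b k) / c := h3
        _ = ∑ b ∈ A.erase a, ν b / c * b k := by
            rw [Finset.sum_div]
            exact Finset.sum_congr rfl fun b _ => by ring
  · exfalso
    have hνa : ν a = 1 := le_antisymm hνa_le (not_lt.1 hlt)
    have hlama_le : lam a ≤ 1 := hlam1 ▸ Finset.single_le_sum (fun b _ => hlam0 b) ha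
    have hmua_le : mu a ≤ 1 := hmu1 ▸ Finset.single_le_sum (fun b _ => hmu0 b) ha
    have hνa' : t₁ * lam a + t₂ * mu a = 1 := hνa
    have hlama : lam a = 1 := by nlinarith
    have hmua : mu a = 1 := by nlinarith
    have hlrest : ∀ b ∈ A.erase a, lam b = 0 := by
      have hs : ∑ b ∈ A.erase a, lam b = 0 := by
        have h' := Finset.add_sum_erase A lam ha; linarith [hlam1]
      exact fun b hb => le_antisymm
        (hs ▸ Finset.single_le_sum (fun b _ => hlam0 b) hb) (hlam0 b)
    have hmrest : ∀ b ∈ A.erase a, mu b = 0 := by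
      have hs : ∑ b ∈ A.erase a, mu b = 0 := by
        have h' := Finset.add_sum_erase A mu ha; linarith [hmu1]
      exact fun b hb => le_antisymm
        (hs ▸ Finset.single_le_sum (fun b _ => hmu0 b) hb) (hmu0 b)
    have hx1le : ∀ k, x₁ k ≤ a k := by
      intro k
      have h' := hlam k
      rw [← Finset.add_sum_erase A (fun b => lam b * b k) ha, hlama, one_mul,
        Finset.sum_eq_zero (fun b hb => by rw [hlrest b hb, zero_mul]), add_zero] at h'
      exact h'
    have hx2le : ∀ k, x₂ k ≤ a k := by
      intro k
      have h' := hmu k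
      rw [← Finset.add_sum_erase A (fun b => mu b * b k) ha, hmua, one_mul,
        Finset.sum_eq_zero (fun b hb => by rw [hmrest b hb, zero_mul]), add_zero] at h'
      exact h'
    have key : ∀ k, x₁ k = a k ∧ x₂ k = a k := by
      intro k
      have h1 := hak k; have h2 := hx1le k; have h3 := hx2le k
      have h4 : t₁ * (a k - x₁ k) + t₂ * (a k - x₂ k) = 0 := by
        linear_combination a k * hts + h1
      have p2 : 0 ≤ t₁ * (a k - x₁ k) := mul_nonneg ht₁.le (sub_nonneg.2 h2)
      have p3 : 0 ≤ t₂ * (a k - x₂ k) := mul_nonneg ht₂.le (sub_nonneg.2 h3)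
      have h5 : t₁ * (a k - x₁ k) = 0 := le_antisymm (by linarith) p2
      have h6 : t₂ * (a k - x₂ k) = 0 := le_antisymm (by linarith) p3
      constructor
      · have := (mul_eq_zero.1 h5).resolve_left ht₁.ne'
        linarith [sub_eq_zero.1 this]
      · have := (mul_eq_zero.1 h6).resolve_left ht₂.ne'
        linarith [sub_eq_zero.1 this]
    have e1 : x₁ = a := funext fun k => (key k).1
    have e2 : x₂ = a := funext fun k => (key k).2
    exact hne2 e1 e2

theorem stmt2 {m : ℕ} (A : Finset (Fin m → ℝ)) : vrs (frame A) = vrs A := by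
  induction A using Finset.strongInduction with
  | _ A ih =>
    by_cases h : ∀ a ∈ A, a ∈ Set.extremePoints ℝ (vrs A)
    · rw [frame, Finset.filter_true_of_mem h]
    · push_neg at h
      obtain ⟨a, haA, hane⟩ := h
      have haer : a ∈ vrs (A.erase a) := mem_vrs_erase haA hane
      have hsub : ∀ b ∈ A, (b : Fin m → ℝ) ∈ vrs (A.erase a) := by
        intro b hb
        rcases eq_or_ne b a with rfl | hba
        · exact haer
        · exact self_mem_vrs (Finset.mem_erase.2 ⟨hba, hb⟩)
      have heq : vrs (A.erase a) = vrs A :=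
        Set.Subset.antisymm (vrs_mono (Finset.erase_subset _ _)) (vrs_trans hsub)
      have ihe := ih (A.erase a) (Finset.erase_ssubset haA)
      have hfr : frame (A.erase a) ⊆ frame A := by
        intro b hb
        rw [frame, Finset.mem_filter] at hb ⊢
        exact ⟨Finset.mem_of_mem_erase hb.1, heq ▸ hb.2⟩
      apply Set.Subset.antisymm
      · exact vrs_trans (fun b hb => self_mem_vrs (Finset.mem_filter.1 hb).1)
      · calc vrs (A : Finset (Fin m → ℝ)) = vrs (A.erase a) := heq.symm
          _ = vrs (frame (A.erase a)) := ihe.symm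
          _ ⊆ vrs (frame A) := vrs_mono hfr
end
end

section
/- Let A ⊆ ℝ^m be finite and nonempty, and fix a coordinate k. Any point a* ∈ A maximizing the k-th coordinate, with ties broken by lexicographic maximality over the remaining coordinates, is an extreme point of vrs(A). (This justifies the 'dimension sorting' preprocessor: it conclusively identifies between 1 and m extreme-efficient DMUs.) -/
open scoped Classical
open Finset

noncomputable section

theorem stmt4 {m : ℕ} (A : Finset (Fin m → ℝ)) (hA : A.Nonempty) (k : Fin m)
    (astar : Fin m → ℝ) (ha : astar ∈ A)
    (hmax : ∀ a ∈ A, a k ≤ astar k)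
    (hlex : ∀ a ∈ A, a ≠ astar → a k = astar k →
      ∃ j : Fin m, a j < astar j ∧ ∀ i : Fin m, i < j → a i = astar i) :
    astar ∈ Set.extremePoints ℝ (vrs A) := by
  classical
  have hmem : astar ∈ vrs A := by
    refine ⟨fun a => if a = astar then 1 else 0, ?_, ?_, ?_⟩
    · intro a; dsimp only; split <;> norm_num
    · simp [Finset.sum_ite_eq', ha]
    · intro j
      have : ∑ a ∈ A, (if a = astar then (1:ℝ) else 0) * a j = astar j := by
        rw [Finset.sum_congr rfl (fun a _ => by rw [ite_mul, one_mul, zero_mul])]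
        simp [Finset.sum_ite_eq', ha]
      rw [this]
  refine ⟨hmem, ?_⟩
  intro x hx y hy hseg
  obtain ⟨lx, hlx0, hlx1, hlxle⟩ := hx
  obtain ⟨ly, hly0, hly1, hlyle⟩ := hy
  obtain ⟨t, s, ht, hs, hts, heq⟩ := hseg
  have heqj : ∀ j, t * x j + s * y j = astar j := by
    intro j
    have := congrFun heq j
    simpa using this
  -- generic bound lemma
  have bound : ∀ (l : (Fin m → ℝ) → ℝ) (j : Fin m), (∀ a, 0 ≤ l a) →
      (∑ a ∈ A, l a) = 1 → (∀ a ∈ A, l a ≠ 0 → a j ≤ astar j) →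
      ∑ a ∈ A, l a * a j ≤ astar j := by
    intro l j hl0 hl1 hsupp
    calc ∑ a ∈ A, l a * a j ≤ ∑ a ∈ A, l a * astar j := by
          apply Finset.sum_le_sum
          intro a haA
          by_cases h : l a = 0
          · simp [h]
          · exact mul_le_mul_of_nonneg_left (hsupp a haA h) (hl0 a)
      _ = astar j := by rw [← Finset.sum_mul, hl1, one_mul]
  have tight : ∀ (l : (Fin m → ℝ) → ℝ) (j : Fin m), (∀ a, 0 ≤ l a) →
      (∀ a ∈ A, l a ≠ 0 → a j ≤ astar j) →
      (∑ a ∈ A, l a * a j) = ∑ a ∈ A, l a * astar j →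
      ∀ a ∈ A, l a ≠ 0 → a j = astar j := by
    intro l j hl0 hsupp hsum a haA hla
    have h0 : ∑ a ∈ A, l a * (astar j - a j) = 0 := by
      simp only [mul_sub]
      rw [Finset.sum_sub_distrib, hsum, sub_self]
    have hnn : ∀ b ∈ A, 0 ≤ l b * (astar j - b j) := by
      intro b hbA
      by_cases h : l b = 0
      · simp [h]
      · exact mul_nonneg (hl0 b) (sub_nonneg.2 (hsupp b hbA h))
    have := (Finset.sum_eq_zero_iff_of_nonneg hnn).1 h0 a haA
    rcases mul_eq_zero.1 this with h | h
    · exact absurd h hla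
    · linarith [sub_eq_zero.1 h]
  -- the combined step at a coordinate j
  set P : Fin m → Prop := fun j =>
    x j = astar j ∧ y j = astar j ∧
    (∀ a ∈ A, lx a ≠ 0 → a j = astar j) ∧ (∀ a ∈ A, ly a ≠ 0 → a j = astar j) with hP
  have step : ∀ j : Fin m, (∀ a ∈ A, lx a ≠ 0 → a j ≤ astar j) →
      (∀ a ∈ A, ly a ≠ 0 → a j ≤ astar j) → P j := by
    intro j hsx hsy
    have hbx := bound lx j hlx0 hlx1 hsx
    have hby := bound ly j hly0 hly1 hsy
    have hxj : x j ≤ astar j := (hlxle j).trans hbx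
    have hyj : y j ≤ astar j := (hlyle j).trans hby
    have hsum : t * astar j + s * astar j = astar j := by
      rw [← add_mul, hts, one_mul]
    have h1 : t * x j = t * astar j := by
      nlinarith [mul_le_mul_of_nonneg_left hxj ht.le, mul_le_mul_of_nonneg_left hyj hs.le,
        heqj j]
    have h2 : s * y j = s * astar j := by
      nlinarith [mul_le_mul_of_nonneg_left hxj ht.le, mul_le_mul_of_nonneg_left hyj hs.le,
        heqj j]
    have hxeq : x j = astar j := mul_left_cancel₀ (ne_of_gt ht) h1
    have hyeq : y j = astar j := mul_left_cancel₀ (ne_of_gt hs) h2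
    have hsumx : ∑ a ∈ A, lx a * a j = ∑ a ∈ A, lx a * astar j := by
      have : ∑ a ∈ A, lx a * astar j = astar j := by
        rw [← Finset.sum_mul, hlx1, one_mul]
      rw [this]
      exact le_antisymm hbx (hxeq ▸ hlxle j)
    have hsumy : ∑ a ∈ A, ly a * a j = ∑ a ∈ A, ly a * astar j := by
      have : ∑ a ∈ A, ly a * astar j = astar j := by
        rw [← Finset.sum_mul, hly1, one_mul]
      rw [this]
      exact le_antisymm hby (hyeq ▸ hlyle j)
    exact ⟨hxeq, hyeq, tight lx j hlx0 hsx hsumx, tight ly j hly0 hsy hsumy⟩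
  -- step at coordinate k: supports lie in the tie set
  have hPk : P k := step k (fun a haA _ => hmax a haA) (fun a haA _ => hmax a haA)
  have hBx : ∀ a ∈ A, lx a ≠ 0 → a k = astar k := hPk.2.2.1
  have hBy : ∀ a ∈ A, ly a ≠ 0 → a k = astar k := hPk.2.2.2
  -- strong induction over coordinates
  have key : ∀ n : ℕ, ∀ j : Fin m, (j : ℕ) = n → P j := by
    intro n
    induction n using Nat.strong_induction_on with
    | _ n IH =>
      intro j hj
      have IH' : ∀ i : Fin m, i < j → P i := fun i hi =>
        IH (i : ℕ) (hj ▸ hi) i rfl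
      have hsup : ∀ (l : (Fin m → ℝ) → ℝ),
          (∀ a ∈ A, l a ≠ 0 → a k = astar k) →
          (∀ i : Fin m, i < j → ∀ a ∈ A, l a ≠ 0 → a i = astar i) →
          ∀ a ∈ A, l a ≠ 0 → a j ≤ astar j := by
        intro l hB hIH a haA hla
        by_cases hne : a = astar
        · rw [hne]
        · obtain ⟨j₀, hj₀lt, hj₀eq⟩ := hlex a haA hne (hB a haA hla)
          rcases lt_trichotomy j j₀ with h | h | h
          · exact le_of_eq (hj₀eq j h)
          · exact le_of_lt (h ▸ hj₀lt)
          · exact absurd (hIH j₀ h a haA hla) (ne_of_lt hj₀lt)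
      exact step j
        (hsup lx hBx (fun i hi => (IH' i hi).2.2.1))
        (hsup ly hBy (fun i hi => (IH' i hi).2.2.2))
  have hall : ∀ j : Fin m, P j := fun j => key (j : ℕ) j rfl
  exact funext fun j => (hall j).1
end
end

section
/- Let F̄ ⊆ ℝ^m be finite and nonempty and let b ∉ vrs(F̄). Then there exists π ∈ ℝ^m with π ≥ 0, π ≠ 0, and β ∈ ℝ such that ⟨π, a⟩ ≤ β for all a ∈ F̄ and ⟨π, b⟩ > β. That is, b can be separated from vrs(F̄) by a hyperplane with a nonnegative normal vector. -/
open scoped Classical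
open Finset
open scoped Pointwise

noncomputable section

lemma centerMass_apply {m : ℕ} (F : Finset (Fin m → ℝ)) (w : (Fin m → ℝ) → ℝ)
    (hw1 : ∑ a ∈ F, w a = 1) (k : Fin m) :
    F.centerMass w id k = ∑ a ∈ F, w a * a k := by
  rw [Finset.centerMass, hw1, inv_one, one_smul]
  simp [Finset.sum_apply]

lemma vrs_eq_add {m : ℕ} (F : Finset (Fin m → ℝ)) :
    vrs F = convexHull ℝ (F : Set (Fin m → ℝ)) + {v : Fin m → ℝ | ∀ k, v k ≤ 0} := by
  ext z
  constructor
  · rintro ⟨l, hl0, hl1, hle⟩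
    refine ⟨F.centerMass l id, ?_, z - F.centerMass l id, ?_, (add_sub_cancel _ _)⟩
    · rw [Finset.convexHull_eq]
      exact ⟨l, fun y _ => hl0 y, hl1, rfl⟩
    · intro k
      have h := centerMass_apply F l hl1 k
      simp only [Pi.sub_apply, sub_nonpos, h]
      exact hle k
  · rintro ⟨y, hy, v, hv, rfl⟩
    rw [Finset.convexHull_eq] at hy
    obtain ⟨w, hw0, hw1, hwy⟩ := hy
    refine ⟨fun a => if a ∈ F then w a else 0, ?_, ?_, ?_⟩
    · intro a; dsimp only; split_ifs with h
      · exact hw0 a h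
      · exact le_refl 0
    · rw [Finset.sum_congr rfl fun a ha => if_pos ha]; exact hw1
    · intro k
      have : ∑ a ∈ F, (if a ∈ F then w a else 0) * a k = ∑ a ∈ F, w a * a k :=
        Finset.sum_congr rfl fun a ha => by rw [if_pos ha]
      rw [this]
      have h := centerMass_apply F w hw1 k
      rw [hwy] at h
      calc (y + v) k = y k + v k := rfl
        _ ≤ y k := by linarith [hv k]
        _ = ∑ a ∈ F, w a * a k := h

lemma mem_vrs_self {m : ℕ} {F : Finset (Fin m → ℝ)} {a : Fin m → ℝ} (ha : a ∈ F) :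
    a ∈ vrs F := by
  refine ⟨fun x => if x = a then 1 else 0, ?_, ?_, ?_⟩
  · intro x; dsimp only; split_ifs <;> norm_num
  · rw [Finset.sum_ite_eq' F a (fun _ => (1:ℝ)), if_pos ha]
  · intro k
    have : ∑ x ∈ F, (if x = a then (1:ℝ) else 0) * x k = ∑ x ∈ F, (if x = a then a k else 0) := by
      refine Finset.sum_congr rfl fun x _ => ?_
      split_ifs with h <;> simp [h]
    rw [this, Finset.sum_ite_eq' F a (fun _ => a k), if_pos ha]

theorem stmt6 {m : ℕ} (F : Finset (Fin m → ℝ)) (hF : F.Nonempty)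
    (b : Fin m → ℝ) (hb : b ∉ vrs F) :
    ∃ (π : Fin m → ℝ) (β : ℝ), (∀ i, 0 ≤ π i) ∧ π ≠ 0 ∧
      (∀ a ∈ F, ∑ i, π i * a i ≤ β) ∧ β < ∑ i, π i * b i := by
  have hconv : Convex ℝ (vrs F) := by
    rw [vrs_eq_add]
    exact (convex_convexHull ℝ _).add (by
      intro x hx y hy a c ha hc hab k
      have := hx k; have := hy k
      simp only [Pi.add_apply, Pi.smul_apply, smul_eq_mul, Set.mem_setOf_eq] at *
      nlinarith)
  have hclosed : IsClosed (vrs F) := by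
    rw [vrs_eq_add]
    refine IsClosed.add_left_of_isCompact ?_ ((F.finite_toSet).isCompact_convexHull (𝕜 := ℝ))
    have : {v : Fin m → ℝ | ∀ k, v k ≤ 0} = ⋂ k, {v : Fin m → ℝ | v k ≤ 0} := by
      ext v; simp [Set.mem_iInter]
    rw [this]
    exact isClosed_iInter fun k => isClosed_le (continuous_apply k) continuous_const
  obtain ⟨f, u, hfs, hfb⟩ := geometric_hahn_banach_closed_point hconv hclosed hb
  set π : Fin m → ℝ := fun i => f (Pi.single i 1) with hπ
  have hfx : ∀ x : Fin m → ℝ, f x = ∑ i, π i * x i := by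
    intro x
    have hx : x = ∑ i, x i • (Pi.single i 1 : Fin m → ℝ) := by
      ext j; simp [Pi.single_apply, Finset.sum_apply]
    conv_lhs => rw [hx]
    rw [map_sum]
    refine Finset.sum_congr rfl fun i _ => ?_
    rw [map_smul]; simp [hπ, smul_eq_mul, mul_comm]
  obtain ⟨a₀, ha₀⟩ := hF
  have ha₀v : a₀ ∈ vrs F := mem_vrs_self ha₀
  have hπ0 : ∀ i, 0 ≤ π i := by
    intro i
    by_contra h
    push_neg at h
    set t : ℝ := (u - f a₀ + 1) / (-π i) with ht
    have htpos : 0 < t := by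
      apply div_pos
      · linarith [hfs a₀ ha₀v]
      · linarith
    have hmem : (a₀ - t • (Pi.single i 1 : Fin m → ℝ)) ∈ vrs F := by
      rw [vrs_eq_add]
      refine ⟨a₀, subset_convexHull ℝ _ ha₀, -(t • (Pi.single i 1 : Fin m → ℝ)), ?_, (sub_eq_add_neg _ _).symm⟩
      intro k
      simp only [Pi.neg_apply, Pi.smul_apply, Pi.single_apply, smul_eq_mul]
      split_ifs <;> simp <;> positivity
    have := hfs _ hmem
    rw [map_sub, map_smul] at this
    have hfe : f (Pi.single i 1) = π i := rfl
    rw [hfe, smul_eq_mul] at this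
    have : f a₀ - t * π i < u := this
    have htπ : t * (-π i) = u - f a₀ + 1 := by
      have hne : π i ≠ 0 := ne_of_lt h
      rw [ht]; field_simp
    nlinarith
  refine ⟨π, u, hπ0, ?_, ?_, ?_⟩
  · intro h
    have h1 : f a₀ < u := hfs a₀ ha₀v
    have h2 : u < f b := hfb
    rw [hfx a₀, hfx b, h] at *
    simp at h1 h2
    linarith
  · intro a ha
    have := hfs a (mem_vrs_self ha)
    rw [hfx a] at this
    exact le_of_lt this
  · rw [← hfx b]; exact hfb
end
end

section
/- Let A ⊆ ℝ^m be finite, F̄ ⊆ A, and suppose π ∈ ℝ^m with π ≥ 0, π ≠ 0, and β ∈ ℝ satisfy ⟨π, a⟩ ≤ β for all a ∈ F̄ and ⟨π, b⟩ > β for some b ∈ A. Then the set M = argmax_{a ∈ A} ⟨π, a⟩ is disjoint from F̄ and contains at least one extreme point of vrs(A). In particular, translating a separating hyperplane uncovers a new frame element a* ∈ A \ F̄. -/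
open scoped Classical
open Finset

noncomputable section

private lemma exists_lex_max' {m : ℕ} (M : Finset (Fin m → ℝ)) (h : M.Nonempty) :
    ∃ a ∈ M, ∀ a' ∈ M, ∀ k : Fin m, (∀ j < k, a' j = a j) → a' k ≤ a k := by
  haveI : WellFoundedLT (Fin m) := inferInstance
  obtain ⟨a, haM, hmax⟩ := M.exists_max_image (fun x : Fin m → ℝ => toLex x) h
  refine ⟨a, haM, fun a' ha' k hag => ?_⟩
  by_contra hlt
  push_neg at hlt
  exact (not_lt_of_ge (α := Lex (Fin m → ℝ)) (hmax a' ha')) ⟨k, fun j hj => (hag j hj).symm, hlt⟩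

private lemma convex_eq' {t₁ t₂ u v w : ℝ} (ht₁ : 0 < t₁) (ht₂ : 0 < t₂)
    (hts : t₁ + t₂ = 1) (hu : u ≤ w) (hv : v ≤ w) (h : t₁ * u + t₂ * v = w) :
    u = w ∧ v = w := by
  have h3 : t₁ * (w - u) + t₂ * (w - v) = 0 := by linear_combination w * hts - h
  have h1 : 0 ≤ t₁ * (w - u) := mul_nonneg ht₁.le (sub_nonneg.2 hu)
  have h2 : 0 ≤ t₂ * (w - v) := mul_nonneg ht₂.le (sub_nonneg.2 hv)
  have e1 : t₁ * (w - u) = 0 := by linarith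
  have e2 : t₂ * (w - v) = 0 := by linarith
  constructor
  · have := (mul_eq_zero.1 e1).resolve_left ht₁.ne'
    linarith
  · have := (mul_eq_zero.1 e2).resolve_left ht₂.ne'
    linarith

/-- key bound: dot product of π with a vrs element is at most the weighted average
of dot products. -/
private lemma dot_le' {m : ℕ} (A : Finset (Fin m → ℝ)) (π : Fin m → ℝ)
    (hπ : ∀ i, 0 ≤ π i) (l : (Fin m → ℝ) → ℝ) (hl0 : ∀ a, 0 ≤ l a)
    (x : Fin m → ℝ) (hx : ∀ k, x k ≤ ∑ a ∈ A, l a * a k) :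
    ∑ k, π k * x k ≤ ∑ a ∈ A, l a * ∑ k, π k * a k := by
  calc ∑ k, π k * x k ≤ ∑ k, π k * (∑ a ∈ A, l a * a k) :=
        Finset.sum_le_sum fun k _ => mul_le_mul_of_nonneg_left (hx k) (hπ k)
    _ = ∑ a ∈ A, l a * ∑ k, π k * a k := by
        simp_rw [Finset.mul_sum]
        rw [Finset.sum_comm]
        exact Finset.sum_congr rfl fun a _ => Finset.sum_congr rfl fun k _ => by ring

theorem stmt7 {m : ℕ} (A Fbar : Finset (Fin m → ℝ)) (hFA : Fbar ⊆ A)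
    (π : Fin m → ℝ) (β : ℝ) (hπ : ∀ i, 0 ≤ π i) (hπ0 : π ≠ 0)
    (hsep : ∀ a ∈ Fbar, ∑ i, π i * a i ≤ β)
    (b : Fin m → ℝ) (hb : b ∈ A) (hbβ : β < ∑ i, π i * b i) :
    (∀ a ∈ A.filter (fun a => ∀ a' ∈ A, ∑ i, π i * a' i ≤ ∑ i, π i * a i), a ∉ Fbar) ∧
    ∃ a ∈ A.filter (fun a => ∀ a' ∈ A, ∑ i, π i * a' i ≤ ∑ i, π i * a i),
      a ∈ Set.extremePoints ℝ (vrs A) := by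
  classical
  set f : (Fin m → ℝ) → ℝ := fun a => ∑ i, π i * a i with hf
  set M : Finset (Fin m → ℝ) := A.filter (fun a => ∀ a' ∈ A, f a' ≤ f a) with hMdef
  -- M is nonempty
  obtain ⟨a₀, ha₀A, ha₀max⟩ := A.exists_max_image f ⟨b, hb⟩
  have hMne : M.Nonempty := ⟨a₀, mem_filter.2 ⟨ha₀A, ha₀max⟩⟩
  constructor
  · -- first conjunct: argmax disjoint from Fbar
    intro a haM haF
    have h1 : f b ≤ f a := (mem_filter.1 haM).2 b hb
    have h2 : f a ≤ β := hsep a haF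
    simp only [hf] at h1 h2
    linarith
  -- second conjunct
  obtain ⟨c, hcM, hclex⟩ := exists_lex_max' M hMne
  have hcA : c ∈ A := (mem_filter.1 hcM).1
  have hcmax : ∀ a ∈ A, f a ≤ f c := (mem_filter.1 hcM).2
  refine ⟨c, hcM, ?_, ?_⟩
  · -- c ∈ vrs A
    refine ⟨fun a => if a = c then 1 else 0, fun a => by positivity, ?_, fun k => ?_⟩
    · rw [Finset.sum_ite_eq' A c (fun _ => 1)]
      simp [hcA]
    · have : ∑ a ∈ A, (if a = c then 1 else 0) * a k
          = ∑ a ∈ A, (if a = c then a k else 0) := by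
        refine Finset.sum_congr rfl fun a _ => by split <;> simp
      rw [this, Finset.sum_ite_eq' A c (fun a => a k)]
      simp [hcA]
  · -- c is an extreme point
    intro x₁ hx₁v x₂ hx₂v hseg
    obtain ⟨t₁, t₂, ht₁, ht₂, hts, hsum⟩ := hseg
    obtain ⟨l₁, hl₁0, hl₁1, hl₁⟩ := hx₁v
    obtain ⟨l₂, hl₂0, hl₂1, hl₂⟩ := hx₂v
    -- dot products
    have hd1 : ∑ k, π k * x₁ k ≤ f c := by
      calc ∑ k, π k * x₁ k ≤ ∑ a ∈ A, l₁ a * f a := dot_le' A π hπ l₁ hl₁0 x₁ hl₁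
        _ ≤ ∑ a ∈ A, l₁ a * f c :=
            Finset.sum_le_sum fun a ha =>
              mul_le_mul_of_nonneg_left (hcmax a ha) (hl₁0 a)
        _ = f c := by rw [← Finset.sum_mul, hl₁1, one_mul]
    have hd2 : ∑ k, π k * x₂ k ≤ f c := by
      calc ∑ k, π k * x₂ k ≤ ∑ a ∈ A, l₂ a * f a := dot_le' A π hπ l₂ hl₂0 x₂ hl₂
        _ ≤ ∑ a ∈ A, l₂ a * f c :=
            Finset.sum_le_sum fun a ha =>
              mul_le_mul_of_nonneg_left (hcmax a ha) (hl₂0 a)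
        _ = f c := by rw [← Finset.sum_mul, hl₂1, one_mul]
    have hcomb : t₁ * (∑ k, π k * x₁ k) + t₂ * (∑ k, π k * x₂ k) = f c := by
      have : ∀ k, t₁ * x₁ k + t₂ * x₂ k = c k := fun k => congrFun hsum k
      simp only [hf]
      rw [Finset.mul_sum, Finset.mul_sum, ← Finset.sum_add_distrib]
      refine Finset.sum_congr rfl fun k _ => ?_
      rw [← this k]; ring
    obtain ⟨he1, he2⟩ := convex_eq' ht₁ ht₂ hts hd1 hd2 hcomb
    -- supports are in M
    have hsupp : ∀ (l : (Fin m → ℝ) → ℝ), (∀ a, 0 ≤ l a) → (∑ a ∈ A, l a) = 1 →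
        (∑ a ∈ A, l a * f a) = f c → ∀ a ∈ A, l a ≠ 0 → a ∈ M := by
      intro l hl0 hl1 hlf a ha hla
      have hzero : ∑ a ∈ A, l a * (f c - f a) = 0 := by
        simp_rw [mul_sub]
        rw [Finset.sum_sub_distrib, ← Finset.sum_mul, hl1, one_mul, hlf, sub_self]
      have hterm := (Finset.sum_eq_zero_iff_of_nonneg
        (fun a' ha' => mul_nonneg (hl0 a') (sub_nonneg.2 (hcmax a' ha')))).1 hzero a ha
      have hfa : f a = f c := by
        rcases mul_eq_zero.1 hterm with h | h
        · exact absurd h hla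
        · linarith [sub_eq_zero.1 h]
      exact mem_filter.2 ⟨ha, fun a' ha' => hfa ▸ hcmax a' ha'⟩
    have hlf1 : ∑ a ∈ A, l₁ a * f a = f c := by
      have h1 : ∑ a ∈ A, l₁ a * f a ≤ f c := by
        calc ∑ a ∈ A, l₁ a * f a ≤ ∑ a ∈ A, l₁ a * f c :=
              Finset.sum_le_sum fun a ha =>
                mul_le_mul_of_nonneg_left (hcmax a ha) (hl₁0 a)
          _ = f c := by rw [← Finset.sum_mul, hl₁1, one_mul]
      have h2 : f c ≤ ∑ a ∈ A, l₁ a * f a := by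
        rw [← he1]; exact dot_le' A π hπ l₁ hl₁0 x₁ hl₁
      linarith
    have hlf2 : ∑ a ∈ A, l₂ a * f a = f c := by
      have h1 : ∑ a ∈ A, l₂ a * f a ≤ f c := by
        calc ∑ a ∈ A, l₂ a * f a ≤ ∑ a ∈ A, l₂ a * f c :=
              Finset.sum_le_sum fun a ha =>
                mul_le_mul_of_nonneg_left (hcmax a ha) (hl₂0 a)
          _ = f c := by rw [← Finset.sum_mul, hl₂1, one_mul]
      have h2 : f c ≤ ∑ a ∈ A, l₂ a * f a := by
        rw [← he2]; exact dot_le' A π hπ l₂ hl₂0 x₂ hl₂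
      linarith
    have hsupp1 := hsupp l₁ hl₁0 hl₁1 hlf1
    have hsupp2 := hsupp l₂ hl₂0 hl₂1 hlf2
    -- coordinatewise strong induction
    have key : ∀ n : ℕ, ∀ hn : n < m,
        x₁ ⟨n, hn⟩ = c ⟨n, hn⟩ ∧ x₂ ⟨n, hn⟩ = c ⟨n, hn⟩ ∧
        (∀ a ∈ A, l₁ a ≠ 0 → a ⟨n, hn⟩ = c ⟨n, hn⟩) ∧
        (∀ a ∈ A, l₂ a ≠ 0 → a ⟨n, hn⟩ = c ⟨n, hn⟩) := by
      intro n
      induction n using Nat.strong_induction_on with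
      | _ n IH =>
        intro hn
        set k : Fin m := ⟨n, hn⟩ with hkdef
        have hIH : ∀ j : Fin m, j < k →
            (∀ a ∈ A, l₁ a ≠ 0 → a j = c j) ∧ (∀ a ∈ A, l₂ a ≠ 0 → a j = c j) := by
          intro j hj
          have hj' : (j : ℕ) < n := hj
          have := IH j.1 hj' (j.2.trans_le le_rfl)
          exact ⟨by simpa using this.2.2.1, by simpa using this.2.2.2⟩
        -- z bound
        have hz : ∀ (l : (Fin m → ℝ) → ℝ), (∀ a, 0 ≤ l a) → (∑ a ∈ A, l a) = 1 →
            (∀ a ∈ A, l a ≠ 0 → a ∈ M) → (∀ j < k, ∀ a ∈ A, l a ≠ 0 → a j = c j) →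
            ∑ a ∈ A, l a * a k ≤ c k := by
          intro l hl0 hl1 hlM hag
          calc ∑ a ∈ A, l a * a k ≤ ∑ a ∈ A, l a * c k := by
                refine Finset.sum_le_sum fun a ha => ?_
                by_cases h0 : l a = 0
                · simp [h0]
                · exact mul_le_mul_of_nonneg_left
                    (hclex a (hlM a ha h0) k (fun j hj => hag j hj a ha h0)) (hl0 a)
            _ = c k := by rw [← Finset.sum_mul, hl1, one_mul]
        have hag1 : ∀ j < k, ∀ a ∈ A, l₁ a ≠ 0 → a j = c j :=
          fun j hj a ha h0 => (hIH j hj).1 a ha h0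
        have hag2 : ∀ j < k, ∀ a ∈ A, l₂ a ≠ 0 → a j = c j :=
          fun j hj a ha h0 => (hIH j hj).2 a ha h0
        have hz1 := hz l₁ hl₁0 hl₁1 hsupp1 hag1
        have hz2 := hz l₂ hl₂0 hl₂1 hsupp2 hag2
        have hx1k : x₁ k ≤ c k := (hl₁ k).trans hz1
        have hx2k : x₂ k ≤ c k := (hl₂ k).trans hz2
        have hck : t₁ * x₁ k + t₂ * x₂ k = c k := congrFun hsum k
        obtain ⟨he1k, he2k⟩ := convex_eq' ht₁ ht₂ hts hx1k hx2k hck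
        -- support at k
        have hsk : ∀ (l : (Fin m → ℝ) → ℝ), (∀ a, 0 ≤ l a) → (∑ a ∈ A, l a) = 1 →
            (∀ a ∈ A, l a ≠ 0 → a ∈ M) → (∀ j < k, ∀ a ∈ A, l a ≠ 0 → a j = c j) →
            (∑ a ∈ A, l a * a k = c k) → ∀ a ∈ A, l a ≠ 0 → a k = c k := by
          intro l hl0 hl1 hlM hag hsum' a ha hla
          have hzero : ∑ a ∈ A, l a * (c k - a k) = 0 := by
            simp_rw [mul_sub]
            rw [Finset.sum_sub_distrib, hsum']
            have : ∑ a ∈ A, l a * c k = c k := by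
              rw [← Finset.sum_mul, hl1, one_mul]
            rw [this, sub_self]
          have hterm := (Finset.sum_eq_zero_iff_of_nonneg (fun a' ha' => ?_)).1 hzero a ha
          · rcases mul_eq_zero.1 hterm with h | h
            · exact absurd h hla
            · linarith [sub_eq_zero.1 h]
          · by_cases h0 : l a' = 0
            · simp [h0]
            · exact mul_nonneg (hl0 a') (sub_nonneg.2
                (hclex a' (hlM a' ha' h0) k (fun j hj => hag j hj a' ha' h0)))
        have hzeq1 : ∑ a ∈ A, l₁ a * a k = c k :=
          le_antisymm hz1 (by rw [← he1k]; exact hl₁ k)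
        have hzeq2 : ∑ a ∈ A, l₂ a * a k = c k :=
          le_antisymm hz2 (by rw [← he2k]; exact hl₂ k)
        exact ⟨he1k, he2k, hsk l₁ hl₁0 hl₁1 hsupp1 hag1 hzeq1, hsk l₂ hl₂0 hl₂1 hsupp2 hag2 hzeq2⟩
    · funext k
      simpa using (key k.1 k.2).1
end
end

section
/- Let A ⊆ ℝ^m be finite with frame F, and suppose π ≥ 0 has all coordinates strictly positive. Then every element of argmax_{a ∈ A} ⟨π, a⟩ that is a vertex of the face {x ∈ conv(A) : ⟨π,x⟩ = max_{a∈A}⟨π,a⟩} is an extreme point of vrs(A). -/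
open scoped Classical
open Finset

noncomputable section

lemma key_vrs {m : ℕ} (A : Finset (Fin m → ℝ)) (π : Fin m → ℝ) (hπ : ∀ i, 0 < π i)
    (M : ℝ) (hmax : ∀ a ∈ A, ∑ i, π i * a i ≤ M)
    (z : Fin m → ℝ) (hz : z ∈ vrs A) :
    ∑ i, π i * z i ≤ M ∧
      (∑ i, π i * z i = M → z ∈ convexHull ℝ (A : Set (Fin m → ℝ))) := by
  obtain ⟨l, hl0, hl1, hle⟩ := hz
  set w : Fin m → ℝ := fun k => ∑ a ∈ A, l a * a k with hw
  have hPw : ∑ i, π i * w i = ∑ a ∈ A, l a * ∑ i, π i * a i := by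
    simp only [hw, Finset.mul_sum]
    rw [Finset.sum_comm]
    congr 1; ext a; congr 1; ext i; ring
  have hPwM : ∑ i, π i * w i ≤ M := by
    rw [hPw]
    calc ∑ a ∈ A, l a * ∑ i, π i * a i ≤ ∑ a ∈ A, l a * M := by
          apply Finset.sum_le_sum
          intro a haA
          exact mul_le_mul_of_nonneg_left (hmax a haA) (hl0 a)
      _ = M := by rw [← Finset.sum_mul, hl1, one_mul]
  have hPzw : ∑ i, π i * z i ≤ ∑ i, π i * w i := by
    apply Finset.sum_le_sum
    intro i _
    exact mul_le_mul_of_nonneg_left (hle i) (hπ i).le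
  refine ⟨hPzw.trans hPwM, fun hM => ?_⟩
  have hzw : z = w := by
    have hsum0 : ∑ i, π i * (w i - z i) ≤ 0 := by
      have : ∑ i, π i * (w i - z i) = (∑ i, π i * w i) - ∑ i, π i * z i := by
        rw [← Finset.sum_sub_distrib]; congr 1; ext i; ring
      rw [this, hM]; linarith
    have hnn : ∀ i ∈ Finset.univ, 0 ≤ π i * (w i - z i) := fun i _ =>
      mul_nonneg (hπ i).le (by linarith [hle i])
    have hall : ∀ i ∈ Finset.univ, π i * (w i - z i) = 0 := by
      have := (Finset.sum_eq_zero_iff_of_nonneg hnn).mp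
        (le_antisymm hsum0 (Finset.sum_nonneg hnn))
      exact this
    funext i
    have := hall i (Finset.mem_univ i)
    have hne := (hπ i).ne'
    have : w i - z i = 0 := by
      rcases mul_eq_zero.mp this with h | h
      · exact absurd h hne
      · exact h
    linarith
  rw [hzw]
  have : w = ∑ a ∈ A, l a • a := by
    funext k
    simp [hw, Finset.sum_apply]
  rw [this, ← Finset.centerMass_eq_of_sum_1 _ _ hl1]
  exact Finset.centerMass_mem_convexHull _ (fun a _ => hl0 a) (by rw [hl1]; norm_num)
    (fun a haA => haA)

theorem stmt8 {m : ℕ} (A : Finset (Fin m → ℝ)) (π : Fin m → ℝ) (hπ : ∀ i, 0 < π i)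
    (astar : Fin m → ℝ) (ha : astar ∈ A)
    (hmax : ∀ a ∈ A, ∑ i, π i * a i ≤ ∑ i, π i * astar i)
    (hvert : astar ∈ Set.extremePoints ℝ
      {x ∈ convexHull ℝ (A : Set (Fin m → ℝ)) | ∑ i, π i * x i = ∑ i, π i * astar i}) :
    astar ∈ Set.extremePoints ℝ (vrs A) := by
  set M := ∑ i, π i * astar i with hM
  rw [mem_extremePoints]
  constructor
  · -- astar ∈ vrs A
    refine ⟨fun a => if a = astar then 1 else 0, ?_, ?_, ?_⟩
    · intro a; by_cases h : a = astar <;> simp [h]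
    · simp [Finset.sum_ite_eq' A astar, ha]
    · intro k
      have : ∑ a ∈ A, (if a = astar then 1 else 0) * a k = astar k := by
        rw [Finset.sum_eq_single astar]
        · simp
        · intro b hb hne; simp [hne]
        · intro h; exact absurd ha h
      rw [this]
  · intro x hx y hy hseg
    obtain ⟨t, s, ht, hs, hts, heq⟩ := hseg
    have hPx := key_vrs A π hπ M hmax x hx
    have hPy := key_vrs A π hπ M hmax y hy
    have hcomb : t * (∑ i, π i * x i) + s * (∑ i, π i * y i) = M := by
      rw [hM]
      have : ∀ i, astar i = t * x i + s * y i := by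
        intro i; rw [← heq]; simp
      rw [Finset.mul_sum, Finset.mul_sum, ← Finset.sum_add_distrib]
      congr 1; ext i; rw [this i]; ring
    have h3 : (t + s) * M = M := by rw [hts]; ring
    have hPxM : ∑ i, π i * x i = M := by
      by_contra hne
      have hlt : ∑ i, π i * x i < M := lt_of_le_of_ne hPx.1 hne
      have h1 : 0 < t * (M - ∑ i, π i * x i) := mul_pos ht (by linarith)
      have h2 : 0 ≤ s * (M - ∑ i, π i * y i) := mul_nonneg hs.le (by linarith [hPy.1])
      nlinarith [h1, h2, h3, hcomb]
    have hPyM : ∑ i, π i * y i = M := by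
      by_contra hne
      have hlt : ∑ i, π i * y i < M := lt_of_le_of_ne hPy.1 hne
      have h2 : 0 < s * (M - ∑ i, π i * y i) := mul_pos hs (by linarith)
      have h1 : 0 ≤ t * (M - ∑ i, π i * x i) := mul_nonneg ht.le (by linarith [hPx.1])
      nlinarith [h1, h2, h3, hcomb]
    have hxf : x ∈ {x ∈ convexHull ℝ (A : Set (Fin m → ℝ)) | ∑ i, π i * x i = M} :=
      ⟨hPx.2 hPxM, hPxM⟩
    have hyf : y ∈ {x ∈ convexHull ℝ (A : Set (Fin m → ℝ)) | ∑ i, π i * x i = M} :=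
      ⟨hPy.2 hPyM, hPyM⟩
    exact (mem_extremePoints.mp hvert).2 x hxf y hyf ⟨t, s, ht, hs, hts, heq⟩
end
end

section
/- An extreme point a of vrs(A) does not belong to vrs(A \ {a}). Consequently, in BuildHull, a frame element can never be discarded as belonging to a partial hull vrs(F̄) with a ∉ F̄. -/
open scoped Classical
open Finset

noncomputable section

theorem stmt11 {m : ℕ} (A : Finset (Fin m → ℝ)) (a : Fin m → ℝ)
    (ha : a ∈ Set.extremePoints ℝ (vrs A)) :
    a ∉ vrs (A.erase a) ∧
    ∀ Fbar : Finset (Fin m → ℝ), Fbar ⊆ A → a ∉ Fbar → a ∉ vrs Fbar := by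
  have key : ∀ Fbar : Finset (Fin m → ℝ), Fbar ⊆ A → a ∉ Fbar → a ∉ vrs Fbar := by
    intro Fbar hsub hnot hmem
    obtain ⟨l, hl0, hl1, hld⟩ := hmem
    -- members of A are in vrs A
    have hmemA : ∀ b ∈ A, b ∈ vrs A := by
      intro b hb
      refine ⟨fun c => if c = b then 1 else 0, fun c => by positivity, ?_, ?_⟩
      · rw [Finset.sum_ite_eq' A b (fun _ => (1 : ℝ))]
        simp [hb]
      · intro k
        have : ∑ c ∈ A, (if c = b then (1 : ℝ) else 0) * c k
            = ∑ c ∈ A, (if c = b then b k else 0) := by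
          refine Finset.sum_congr rfl fun c _ => ?_
          by_cases h : c = b <;> simp [h]
        rw [this, Finset.sum_ite_eq' A b (fun _ => b k)]
        simp [hb]
    -- extend weights to A
    set l' : (Fin m → ℝ) → ℝ := fun c => if c ∈ Fbar then l c else 0 with hl'
    have hl'0 : ∀ c, 0 ≤ l' c := by
      intro c; simp only [hl']; split
      · exact hl0 c
      · exact le_refl 0
    have hsum' : ∑ c ∈ A, l' c = 1 := by
      rw [← Finset.sum_subset hsub (fun c _ hc => by simp [hl', hc])]
      rw [← hl1]
      exact Finset.sum_congr rfl fun c hc => by simp [hl', hc]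
    have hsumw : ∀ k, ∑ c ∈ A, l' c * c k = ∑ c ∈ Fbar, l c * c k := by
      intro k
      rw [← Finset.sum_subset hsub (fun c _ hc => by simp [hl', hc])]
      exact Finset.sum_congr rfl fun c hc => by simp [hl', hc]
    set x : Fin m → ℝ := fun k => ∑ c ∈ Fbar, l c * c k with hx
    have hxA : x ∈ vrs A := ⟨l', hl'0, hsum', fun k => by rw [hsumw]⟩
    have hyA : (2 • a - x) ∈ vrs A := by
      refine ⟨l', hl'0, hsum', fun k => ?_⟩
      have hak : a k ≤ x k := hld k
      rw [hsumw k]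
      have hxk : x k = ∑ c ∈ Fbar, l c * c k := rfl
      rw [← hxk]
      simp only [Pi.sub_apply, Pi.smul_apply, smul_eq_mul, two_smul, Pi.add_apply]
      linarith
    -- a is the midpoint of x and 2a - x, so extremeness forces x = a
    have hxa : x = a := by
      by_contra hne
      have hmid : (1/2 : ℝ) • x + (1/2 : ℝ) • (2 • a - x) = a := by
        funext k; simp; ring
      have := ha.2 hxA hyA ⟨1/2, 1/2, by norm_num, by norm_num, by norm_num, hmid⟩
      exact hne this
    -- so a is a convex combination of points of Fbar, all ≠ a
    have haCH : a ∈ convexHull ℝ (↑Fbar : Set (Fin m → ℝ)) := by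
      have hposs : (0 : ℝ) < ∑ c ∈ Fbar, l c := by rw [hl1]; norm_num
      have hcm := Finset.centerMass_mem_convexHull Fbar (fun c _ => hl0 c) hposs
        (fun c hc => Finset.mem_coe.mpr hc)
      convert hcm using 1
      rw [Finset.centerMass, hl1]
      funext k
      simp [← hxa, hx, Finset.sum_apply]
    have hconv : Convex ℝ (vrs A) := by
      intro z₁ hz₁ z₂ hz₂ s t hs ht hst
      obtain ⟨l₁, h₁0, h₁1, h₁d⟩ := hz₁
      obtain ⟨l₂, h₂0, h₂1, h₂d⟩ := hz₂
      refine ⟨fun c => s * l₁ c + t * l₂ c, fun c => add_nonneg (mul_nonneg hs (h₁0 c)) (mul_nonneg ht (h₂0 c)), ?_, fun k => ?_⟩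
      · simp [Finset.sum_add_distrib, ← Finset.mul_sum, h₁1, h₂1, hst]
      · have hle := add_le_add (mul_le_mul_of_nonneg_left (h₁d k) hs)
          (mul_le_mul_of_nonneg_left (h₂d k) ht)
        calc (s • z₁ + t • z₂) k = s * z₁ k + t * z₂ k := by simp
        _ ≤ s * (∑ c ∈ A, l₁ c * c k) + t * (∑ c ∈ A, l₂ c * c k) := hle
        _ = ∑ c ∈ A, (s * l₁ c + t * l₂ c) * c k := by
            rw [Finset.mul_sum, Finset.mul_sum, ← Finset.sum_add_distrib]
            exact Finset.sum_congr rfl fun c _ => by ring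
    have hext := (hconv.mem_extremePoints_iff_mem_diff_convexHull_diff).mp ha
    apply hext.2
    refine convexHull_mono ?_ haCH
    intro c hc
    exact ⟨hmemA c (hsub hc), fun h => hnot (Finset.mem_coe.mp ((Set.mem_singleton_iff.mp h) ▸ hc))⟩
  exact ⟨key (A.erase a) (Finset.erase_subset _ _) (Finset.notMem_erase _ _), key⟩
end
end
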